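/- Let H be a real Hilbert space, J : H → ℝ, ū ∈ H and ρ > 0 with J(ū) ≤ J(u) for all u with ‖u - ū‖ ≤ ρ. Assume J is weakly sequentially lower semicontinuous: whenever ⟨v_k, w⟩ → ⟨v, w⟩ for all w ∈ H, one has J(v) ≤ liminf J(v_k). Let (ū_k) and (u_k) be sequences in H such that: ū_k → ū in norm, J(ū_k) → J(ū), ‖u_k - ū‖ ≤ ρ for all k, J(u_k) + (1/2)‖u_k - ū‖² ≤ J(ū_k) + (1/2)‖ū_k - ū‖² for all k, and u_k converges weakly to some u* ∈ H (i.e. ⟨u_k, w⟩ → ⟨u*, w⟩ for all w). Then u* = ū and ‖u_k - ū‖ → 0. -/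

import Mathlib

open Filter

/-- Abstract version of Lemma 3.1: in a real Hilbert space, if `ū` minimizes the weakly
sequentially l.s.c. functional `J` on the closed ball of radius `ρ`, `ū_k → ū` strongly with
`J(ū_k) → J(ū)`, and `u_k` lies in the ball, satisfies the penalized comparison inequality
and converges weakly to `u*`, then `u* = ū` and `u_k → ū` strongly. -/
theorem stmt_8 {H : Type*} [NormedAddCommGroup H] [InnerProductSpace ℝ H]
    (J : H → ℝ) (ubar : H) (ρ : ℝ) (hρ : 0 < ρ)
    (hloc : ∀ u : H, ‖u - ubar‖ ≤ ρ → J ubar ≤ J u)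
    (hlsc : ∀ (v : ℕ → H) (vlim : H),
      (∀ w : H, Tendsto (fun k => (inner ℝ (v k) w : ℝ)) atTop (nhds (inner ℝ vlim w))) →
      J vlim ≤ Filter.liminf (fun k => J (v k)) atTop)
    (ubark uk : ℕ → H) (ustar : H)
    (h1 : Tendsto ubark atTop (nhds ubar))
    (h2 : Tendsto (fun k => J (ubark k)) atTop (nhds (J ubar)))
    (h3 : ∀ k, ‖uk k - ubar‖ ≤ ρ)
    (h4 : ∀ k, J (uk k) + (1 / 2) * ‖uk k - ubar‖ ^ 2 ≤
      J (ubark k) + (1 / 2) * ‖ubark k - ubar‖ ^ 2)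
    (h5 : ∀ w : H, Tendsto (fun k => (inner ℝ (uk k) w : ℝ)) atTop (nhds (inner ℝ ustar w))) :
    ustar = ubar ∧ Tendsto (fun k => ‖uk k - ubar‖) atTop (nhds 0) := by
  -- the norm of `ubark k - ubar` tends to 0
  have hnorm : Tendsto (fun k => ‖ubark k - ubar‖) atTop (nhds 0) :=
    tendsto_iff_norm_sub_tendsto_zero.mp h1
  -- squeeze argument: ‖uk k - ubar‖² tends to 0
  have hupper : Tendsto (fun k => 2 * (J (ubark k) + (1 / 2) * ‖ubark k - ubar‖ ^ 2 - J ubar))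
      atTop (nhds 0) := by
    have : Tendsto (fun k => J (ubark k) + (1 / 2) * ‖ubark k - ubar‖ ^ 2 - J ubar)
        atTop (nhds (J ubar + (1 / 2) * 0 ^ 2 - J ubar)) :=
      ((h2.add ((tendsto_const_nhds.mul (hnorm.pow 2)))).sub tendsto_const_nhds)
    have h0 : (J ubar + (1 / 2 : ℝ) * 0 ^ 2 - J ubar) = 0 := by ring
    rw [h0] at this
    simpa using tendsto_const_nhds.mul this
  have hsq : Tendsto (fun k => ‖uk k - ubar‖ ^ 2) atTop (nhds 0) := by
    apply squeeze_zero (fun k => by positivity)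
      (fun k => ?_) hupper
    have := h4 k
    have hJ : J ubar ≤ J (uk k) := hloc _ (h3 k)
    nlinarith
  have htend : Tendsto (fun k => ‖uk k - ubar‖) atTop (nhds 0) := by
    have := (Real.continuous_sqrt.tendsto 0).comp hsq
    simp only [Function.comp_def, Real.sqrt_sq (norm_nonneg _), Real.sqrt_zero] at this
    exact this
  have hstrong : Tendsto uk atTop (nhds ubar) :=
    tendsto_iff_norm_sub_tendsto_zero.mpr htend
  refine ⟨?_, htend⟩
  apply ext_inner_right ℝ
  intro w
  have hweak : Tendsto (fun k => (inner ℝ (uk k) w : ℝ)) atTop (nhds (inner ℝ ubar w)) := by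
    exact ((continuous_inner.comp (Continuous.prodMk continuous_id continuous_const)).tendsto
      ubar).comp hstrong
  exact tendsto_nhds_unique (h5 w) hweak
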